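/- Let n ≥ 1 and let x_1,…,x_n, y_1,…,y_n, t be indeterminates. Then Σ_λ ∏_{i=1}^{n} (1 − t^{λ_i−i+n+1}) · s_λ(x_1,…,x_n) · s_λ(y_1,…,y_n) = (Δ(x)_n Δ(y)_n)^{-1} · det[ (1−t) / ((1−x_i y_j)(1−t x_i y_j)) ]_{1≤i,j≤n}, where the sum is over all partitions λ with ℓ(λ) ≤ n. -/

import Mathlib

noncomputable section

open scoped BigOperators

/-- The Vandermonde product `Δ(x)ₙ = ∏_{i<j} (x i - x j)`. -/
def vprod {n : ℕ} (x : Fin n → ℂ) : ℂ :=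
  ∏ i : Fin n, ∏ j ∈ Finset.Ioi i, (x i - x j)

/-- The Schur polynomial `s_λ(x₁,…,xₙ) = det[xᵢ^{λⱼ - j + n}]/Δ(x)ₙ`, for a partition `λ`
with at most `n` parts recorded as an antitone function `l : Fin n → ℕ` (0-indexed, so the
exponent is `l j + (n - 1 - j)`). -/
def schurPoly {n : ℕ} (l : Fin n → ℕ) (x : Fin n → ℂ) : ℂ :=
  (Matrix.of fun i j : Fin n => x i ^ (l j + (n - 1 - (j : ℕ)))).det / vprod x

namespace RefinedCauchyAux

/-- Geometric-type series: `Σ_k (1 - t^{k+1}) z^k = (1-t)/((1-z)(1-tz))`. -/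
lemma hasSum_term {z t : ℂ} (hz : ‖z‖ < 1) (ht : ‖t‖ < 1) :
    HasSum (fun k : ℕ => (1 - t ^ (k + 1)) * z ^ k)
      ((1 - t) / ((1 - z) * (1 - t * z))) := by
  have htz : ‖t * z‖ < 1 := by
    have h1 := norm_mul_le t z
    nlinarith [norm_nonneg t, norm_nonneg z]
  have hz1 : (1 : ℂ) - z ≠ 0 := by
    intro h
    rw [sub_eq_zero] at h
    rw [← h] at hz
    simp at hz
  have htz1 : (1 : ℂ) - t * z ≠ 0 := by
    intro h
    rw [sub_eq_zero] at h
    rw [← h] at htz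
    simp at htz
  have h1 := hasSum_geometric_of_norm_lt_one hz
  have h2 := (hasSum_geometric_of_norm_lt_one htz).mul_left t
  have h3 := h1.sub h2
  have hfun : (fun k : ℕ => (1 - t ^ (k + 1)) * z ^ k)
      = fun k : ℕ => z ^ k - t * (t * z) ^ k := by
    funext k
    rw [mul_pow, pow_succ]
    ring
  have hval : (1 - t) / ((1 - z) * (1 - t * z)) = (1 - z)⁻¹ - t * (1 - t * z)⁻¹ := by
    field_simp
    ring
  rw [hfun, hval]
  exact h3

lemma summable_norm_term {z t : ℂ} (hz : ‖z‖ < 1) (ht : ‖t‖ < 1) :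
    Summable fun k : ℕ => ‖(1 - t ^ (k + 1)) * z ^ k‖ := by
  refine Summable.of_nonneg_of_le (fun k => norm_nonneg _) (fun k => ?_)
    ((summable_geometric_of_lt_one (norm_nonneg z) hz).mul_left 2)
  rw [norm_mul, norm_pow]
  have h1 : ‖1 - t ^ (k + 1)‖ ≤ 2 := by
    calc ‖1 - t ^ (k + 1)‖ ≤ ‖(1 : ℂ)‖ + ‖t ^ (k + 1)‖ := norm_sub_le _ _
      _ ≤ 2 := by
        rw [norm_one, norm_pow]
        have h2 := pow_le_one₀ (norm_nonneg t) ht.le (n := k + 1)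
        linarith
  exact mul_le_mul_of_nonneg_right h1 (pow_nonneg (norm_nonneg z) k)

lemma summable_norm_pi_prod : ∀ (m : ℕ) (f : Fin m → ℕ → ℂ),
    (∀ i, Summable fun k => ‖f i k‖) →
    Summable fun k : Fin m → ℕ => ∏ i, ‖f i (k i)‖ := by
  intro m
  induction m with
  | zero =>
    intro f _
    simpa using (hasSum_fintype (fun _ : Fin 0 → ℕ => (1 : ℝ))).summable
  | succ m ih =>
    intro f hf
    rw [← (Fin.consEquiv fun _ : Fin (m + 1) => ℕ).summable_iff]
    have hcomp : ((fun k : Fin (m + 1) → ℕ => ∏ i, ‖f i (k i)‖) ∘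
        (Fin.consEquiv fun _ : Fin (m + 1) => ℕ))
        = fun p : ℕ × (Fin m → ℕ) => ‖f 0 p.1‖ * ∏ i : Fin m, ‖f i.succ (p.2 i)‖ := by
      funext p
      simp [Fin.consEquiv, Fin.prod_univ_succ]
    rw [hcomp]
    apply Summable.mul_of_nonneg (hf 0) (ih (fun i => f i.succ) fun i => hf i.succ)
      (fun k => norm_nonneg _) (fun k => Finset.prod_nonneg fun i _ => norm_nonneg _)

lemma hasSum_pi_prod : ∀ (m : ℕ) (f : Fin m → ℕ → ℂ) (s : Fin m → ℂ),
    (∀ i, HasSum (f i) (s i)) → (∀ i, Summable fun k => ‖f i k‖) →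
    HasSum (fun k : Fin m → ℕ => ∏ i, f i (k i)) (∏ i, s i) := by
  intro m
  induction m with
  | zero =>
    intro f s _ _
    simpa using hasSum_fintype (fun k : Fin 0 → ℕ => ∏ i : Fin 0, f i (k i))
  | succ m ih =>
    intro f s hf hfn
    have h2 : Summable fun k : Fin m → ℕ => ‖∏ i : Fin m, f i.succ (k i)‖ := by
      have := summable_norm_pi_prod m (fun i => f i.succ) (fun i => hfn i.succ)
      simpa [norm_prod] using this
    have h3 : Summable fun p : ℕ × (Fin m → ℕ) => f 0 p.1 * ∏ i : Fin m, f i.succ (p.2 i) := by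
      apply summable_mul_of_summable_norm (hfn 0) h2
    have hmul : HasSum (fun p : ℕ × (Fin m → ℕ) => f 0 p.1 * ∏ i : Fin m, f i.succ (p.2 i))
        (s 0 * ∏ i : Fin m, s i.succ) := by
      apply HasSum.mul (hf 0) (ih (fun i => f i.succ) (fun i => s i.succ)
        (fun i => hf i.succ) (fun i => hfn i.succ)) h3
    refine (Equiv.hasSum_iff (Fin.consEquiv fun _ : Fin (m + 1) => ℕ)).mp ?_
    have hcomp : ((fun k : Fin (m + 1) → ℕ => ∏ i, f i (k i)) ∘
        (Fin.consEquiv fun _ : Fin (m + 1) => ℕ))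
        = fun p : ℕ × (Fin m → ℕ) => f 0 p.1 * ∏ i : Fin m, f i.succ (p.2 i) := by
      funext p
      simp [Fin.consEquiv, Fin.prod_univ_succ]
    rw [hcomp, Fin.prod_univ_succ]
    exact hmul

lemma strictMono_gap {m : ℕ} {ν : Fin m → ℕ} (hν : StrictMono ν) :
    ∀ (d : ℕ) (a b : Fin m), (a : ℕ) - (b : ℕ) = d → b ≤ a →
      ν b + ((a : ℕ) - (b : ℕ)) ≤ ν a := by
  intro d
  induction d with
  | zero =>
    intro a b hd hba
    have hba' : (b : ℕ) ≤ a := hba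
    have : a = b := Fin.ext (by omega)
    subst this
    simp
  | succ d ih =>
    intro a b hd hba
    have hba' : (b : ℕ) ≤ a := hba
    have halt := a.isLt
    have ha : 0 < (a : ℕ) := by omega
    have h1 : ν b + (((⟨(a : ℕ) - 1, by omega⟩ : Fin m) : ℕ) - (b : ℕ)) ≤
        ν ⟨(a : ℕ) - 1, by omega⟩ :=
      ih ⟨(a : ℕ) - 1, by omega⟩ b (by simp; omega) (by rw [Fin.le_def]; simp; omega)
    have h2 : ν ⟨(a : ℕ) - 1, by omega⟩ < ν a := hν (by rw [Fin.lt_def]; simp; omega)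
    simp at h1
    omega

lemma strictMono_le' {m : ℕ} {ν : Fin m → ℕ} (hν : StrictMono ν) (a : Fin m) :
    (a : ℕ) ≤ ν a := by
  have := strictMono_gap hν ((a : ℕ) - ((⟨0, by have := a.isLt; omega⟩ : Fin m) : ℕ))
    a ⟨0, by have := a.isLt; omega⟩ rfl (by rw [Fin.le_def]; exact Nat.zero_le _)
  simp at this
  omega

end RefinedCauchyAux

open RefinedCauchyAux in
/-- **Refined Cauchy identity for Schur polynomials** (Theorem 1):
`Σ_λ ∏_{i=1}^n (1 - t^{λᵢ-i+n+1}) s_λ(x) s_λ(y)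
  = (Δ(x)ₙ Δ(y)ₙ)⁻¹ det[(1-t)/((1-xᵢyⱼ)(1-t xᵢyⱼ))]`,
the sum being over all partitions `λ` with `ℓ(λ) ≤ n`.  It is stated here for complex
values of the variables in a domain of convergence. -/
theorem refined_cauchy_schur (n : ℕ) (hn : 1 ≤ n) (x y : Fin n → ℂ) (t : ℂ)
    (hx : ∀ i, ‖x i‖ < 1 / (8 * n)) (hy : ∀ j, ‖y j‖ < 1 / (8 * n)) (ht : ‖t‖ < 1)
    (hxinj : Function.Injective x) (hyinj : Function.Injective y) :
    HasSum
      (fun l : {l : Fin n → ℕ // Antitone l} =>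
        (∏ i : Fin n, (1 - t ^ (l.1 i + (n - (i : ℕ))))) * schurPoly l.1 x * schurPoly l.1 y)
      ((vprod x * vprod y)⁻¹ *
        (Matrix.of fun i j : Fin n =>
          (1 - t) / ((1 - x i * y j) * (1 - t * (x i * y j)))).det) := by
  classical
  -- basic norm bound
  have hxy : ∀ i j, ‖x i * y j‖ < 1 := by
    intro i j
    have h1 := hx i
    have h2 := hy j
    have hn1 : (1 : ℝ) ≤ (n : ℝ) := by exact_mod_cast hn
    have hb : (1 : ℝ) / (8 * n) ≤ 1 := by
      rw [div_le_one (by positivity)]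
      linarith
    have h3 := norm_mul_le (x i) (y j)
    nlinarith [norm_nonneg (x i), norm_nonneg (y j)]
  set S : Matrix (Fin n) (Fin n) ℂ := Matrix.of fun i j : Fin n =>
    (1 - t) / ((1 - x i * y j) * (1 - t * (x i * y j))) with hS
  -- Step 1: expansion of `det S` as a sum over all `k : Fin n → ℕ`.
  have hdet : HasSum (fun k : Fin n → ℕ =>
      (∏ i : Fin n, (1 - t ^ (k i + 1)) * y i ^ (k i)) *
        (Matrix.of fun i' i : Fin n => x i' ^ (k i)).det) S.det := by
    have hσ : ∀ σ : Equiv.Perm (Fin n),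
        HasSum (fun k : Fin n → ℕ =>
            ((Equiv.Perm.sign σ : ℤ) : ℂ) *
              ∏ i : Fin n, (1 - t ^ (k i + 1)) * (x (σ i) * y i) ^ (k i))
          (((Equiv.Perm.sign σ : ℤ) : ℂ) * ∏ i : Fin n, S (σ i) i) := by
      intro σ
      exact (hasSum_pi_prod n (fun i => fun k => (1 - t ^ (k + 1)) * (x (σ i) * y i) ^ k)
        (fun i => S (σ i) i) (fun i => hasSum_term (hxy _ _) ht)
        (fun i => summable_norm_term (hxy _ _) ht)).mul_left _
    have hsum := hasSum_sum (s := (Finset.univ : Finset (Equiv.Perm (Fin n))))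
      (fun σ _ => hσ σ)
    have hval : S.det = ∑ σ : Equiv.Perm (Fin n),
        ((Equiv.Perm.sign σ : ℤ) : ℂ) * ∏ i : Fin n, S (σ i) i := Matrix.det_apply' S
    have hfun : (fun k : Fin n → ℕ =>
        (∏ i : Fin n, (1 - t ^ (k i + 1)) * y i ^ (k i)) *
          (Matrix.of fun i' i : Fin n => x i' ^ (k i)).det)
        = fun k : Fin n → ℕ => ∑ σ : Equiv.Perm (Fin n),
            ((Equiv.Perm.sign σ : ℤ) : ℂ) *
              ∏ i : Fin n, (1 - t ^ (k i + 1)) * (x (σ i) * y i) ^ (k i) := by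
      funext k
      rw [Matrix.det_apply', Finset.mul_sum]
      refine Finset.sum_congr rfl fun σ _ => ?_
      simp only [Matrix.of_apply, mul_pow, Finset.prod_mul_distrib]
      ring
    rw [hval, hfun]
    exact hsum
  -- the map from (partition, permutation) pairs to exponent sequences
  set G : {l : Fin n → ℕ // Antitone l} × Equiv.Perm (Fin n) → (Fin n → ℕ) :=
    fun p i => p.1.1 (p.2 i) + (n - 1 - ((p.2 i : Fin n) : ℕ)) with hGdef
  have hstrict : ∀ l : {l : Fin n → ℕ // Antitone l},
      StrictAnti (fun j : Fin n => l.1 j + (n - 1 - (j : ℕ))) := by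
    intro l j j' hjj'
    have h1 : l.1 j' ≤ l.1 j := l.2 hjj'.le
    have h2 : (j : ℕ) < j' := hjj'
    have h3 := j'.isLt
    simp only
    omega
  -- injectivity of G
  have hGinj : Function.Injective G := by
    rintro ⟨l, σ⟩ ⟨l', σ'⟩ hE
    have hE' : ∀ i, l.1 (σ i) + (n - 1 - ((σ i : Fin n) : ℕ))
        = l'.1 (σ' i) + (n - 1 - ((σ' i : Fin n) : ℕ)) := fun i => congrFun hE i
    have hμ : StrictAnti (fun j : Fin n => l.1 j + (n - 1 - (j : ℕ))) := hstrict l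
    have hμ' : StrictAnti (fun j : Fin n => l'.1 j + (n - 1 - (j : ℕ))) := hstrict l'
    have hν : StrictMono (fun i : Fin n => l.1 (Fin.rev i) + (n - 1 - ((Fin.rev i : Fin n) : ℕ))) :=
      fun i i' hii' => hμ (Fin.rev_lt_rev.mpr hii')
    have hν' : StrictMono
        (fun i : Fin n => l'.1 (Fin.rev i) + (n - 1 - ((Fin.rev i : Fin n) : ℕ))) :=
      fun i i' hii' => hμ' (Fin.rev_lt_rev.mpr hii')
    have himg : Finset.image (fun j : Fin n => l.1 j + (n - 1 - (j : ℕ))) Finset.univ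
        = Finset.image (fun j : Fin n => l'.1 j + (n - 1 - (j : ℕ))) Finset.univ := by
      have h1 : Finset.image ((fun j : Fin n => l.1 j + (n - 1 - (j : ℕ))) ∘ σ) Finset.univ
          = Finset.image (fun j : Fin n => l.1 j + (n - 1 - (j : ℕ))) Finset.univ := by
        rw [← Finset.image_image, Finset.image_univ_equiv]
      have h2 : Finset.image ((fun j : Fin n => l'.1 j + (n - 1 - (j : ℕ))) ∘ σ') Finset.univ
          = Finset.image (fun j : Fin n => l'.1 j + (n - 1 - (j : ℕ))) Finset.univ := by
        rw [← Finset.image_image, Finset.image_univ_equiv]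
      rw [← h1, ← h2]
      exact congrArg (fun f => Finset.image f Finset.univ) (funext hE')
    have hcard : (Finset.image (fun j : Fin n => l.1 j + (n - 1 - (j : ℕ))) Finset.univ).card
        = n := by
      rw [Finset.card_image_of_injective _ hμ.injective, Finset.card_univ, Fintype.card_fin]
    have hmem : ∀ i : Fin n,
        (fun i : Fin n => l.1 (Fin.rev i) + (n - 1 - ((Fin.rev i : Fin n) : ℕ))) i
          ∈ Finset.image (fun j : Fin n => l.1 j + (n - 1 - (j : ℕ))) Finset.univ :=
      fun i => Finset.mem_image_of_mem _ (Finset.mem_univ _)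
    have hmem' : ∀ i : Fin n,
        (fun i : Fin n => l'.1 (Fin.rev i) + (n - 1 - ((Fin.rev i : Fin n) : ℕ))) i
          ∈ Finset.image (fun j : Fin n => l.1 j + (n - 1 - (j : ℕ))) Finset.univ := by
      intro i
      rw [himg]
      exact Finset.mem_image_of_mem _ (Finset.mem_univ _)
    have hu1 := Finset.orderEmbOfFin_unique hcard hmem hν
    have hu2 := Finset.orderEmbOfFin_unique hcard hmem' hν'
    have hμμ' : (fun j : Fin n => l.1 j + (n - 1 - (j : ℕ)))
        = fun j : Fin n => l'.1 j + (n - 1 - (j : ℕ)) := by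
      funext j
      have h0 := congrFun (hu1.trans hu2.symm) (Fin.rev j)
      simpa [Fin.rev_rev] using h0
    have hll' : l = l' := by
      apply Subtype.ext
      funext j
      have h0 := congrFun hμμ' j
      omega
    have hσσ' : σ = σ' := by
      have hσeq : ∀ i, σ i = σ' i := by
        intro i
        have h1 : (fun j : Fin n => l.1 j + (n - 1 - (j : ℕ))) (σ i)
            = (fun j : Fin n => l.1 j + (n - 1 - (j : ℕ))) (σ' i) :=
          (hE' i).trans (congrFun hμμ' (σ' i)).symm
        exact hμ.injective h1
      exact Equiv.ext hσeq
    rw [Prod.mk.injEq]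
    exact ⟨hll', hσσ'⟩
  -- support condition for G
  have hGsupp : ∀ k : Fin n → ℕ, k ∉ Set.range G →
      (∏ i : Fin n, (1 - t ^ (k i + 1)) * y i ^ (k i)) *
        (Matrix.of fun i' i : Fin n => x i' ^ (k i)).det = 0 := by
    intro k hk
    by_cases hkinj : Function.Injective k
    · exfalso
      apply hk
      set s : Finset ℕ := Finset.image k Finset.univ with hs
      have hcard : s.card = n := by
        rw [hs, Finset.card_image_of_injective _ hkinj, Finset.card_univ, Fintype.card_fin]
      have hνmono : StrictMono (s.orderEmbOfFin hcard) := (s.orderEmbOfFin hcard).strictMono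
      have hμlow : ∀ j : Fin n, (n - 1 - (j : ℕ)) ≤ s.orderEmbOfFin hcard (Fin.rev j) := by
        intro j
        have h1 : ((Fin.rev j : Fin n) : ℕ) ≤ s.orderEmbOfFin hcard (Fin.rev j) :=
          strictMono_le' hνmono _
        have h2 := Fin.val_rev j
        have h3 := j.isLt
        omega
      have hmem : ∀ i, k i ∈ s := fun i => Finset.mem_image_of_mem _ (Finset.mem_univ _)
      set σ0 : Fin n → Fin n :=
        fun i => Fin.rev ((s.orderIsoOfFin hcard).symm ⟨k i, hmem i⟩) with hσ0
      have hμσ : ∀ i, s.orderEmbOfFin hcard (Fin.rev (σ0 i)) = k i := by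
        intro i
        rw [hσ0]
        simp only [Fin.rev_rev]
        rw [← Finset.coe_orderIsoOfFin_apply, OrderIso.apply_symm_apply]
      have hσ0inj : Function.Injective σ0 := by
        intro i i' hii'
        apply hkinj
        rw [← hμσ i, ← hμσ i', hii']
      have hμanti : StrictAnti (fun j : Fin n => s.orderEmbOfFin hcard (Fin.rev j)) :=
        fun j j' hjj' => hνmono (Fin.rev_lt_rev.mpr hjj')
      have hlanti : Antitone (fun j : Fin n =>
          s.orderEmbOfFin hcard (Fin.rev j) - (n - 1 - (j : ℕ))) := by
        intro j j' hjj'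
        rcases eq_or_lt_of_le hjj' with h | h
        · rw [h]
        · have hrev : Fin.rev j' ≤ Fin.rev j := Fin.rev_le_rev.mpr hjj'
          have hgap := strictMono_gap hνmono _ (Fin.rev j) (Fin.rev j') rfl hrev
          have e1 := Fin.val_rev j
          have e2 := Fin.val_rev j'
          have hj' := j'.isLt
          have hjlt : (j : ℕ) < (j' : ℕ) := h
          simp only
          omega
      refine ⟨(⟨fun j : Fin n => s.orderEmbOfFin hcard (Fin.rev j) - (n - 1 - (j : ℕ)),
        hlanti⟩, Equiv.ofBijective σ0 (Finite.injective_iff_bijective.mp hσ0inj)), ?_⟩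
      funext i
      show (s.orderEmbOfFin hcard (Fin.rev (σ0 i)) - (n - 1 - ((σ0 i : Fin n) : ℕ)))
        + (n - 1 - ((σ0 i : Fin n) : ℕ)) = k i
      have h1 := hμlow (σ0 i)
      have h2 := hμσ i
      omega
    · obtain ⟨i, j, hkij, hij⟩ := Function.not_injective_iff.mp hkinj
      have hz : (Matrix.of fun i' i0 : Fin n => x i' ^ (k i0)).det = 0 :=
        Matrix.det_zero_of_column_eq hij (fun r => by simp [hkij])
      rw [hz, mul_zero]
  -- compose with G and sum fiberwise
  have hcomp := (hGinj.hasSum_iff hGsupp).mpr hdet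
  have hfiber := HasSum.prod_fiberwise hcomp (fun l => hasSum_fintype _)
  -- evaluate the fiber sums
  have key : ∀ l : {l : Fin n → ℕ // Antitone l},
      (∑ σ : Equiv.Perm (Fin n),
        ((fun k : Fin n → ℕ =>
          (∏ i : Fin n, (1 - t ^ (k i + 1)) * y i ^ (k i)) *
            (Matrix.of fun i' i : Fin n => x i' ^ (k i)).det) ∘ G) (l, σ))
      = (∏ i : Fin n, (1 - t ^ (l.1 i + (n - 1 - (i : ℕ)) + 1))) *
          ((Matrix.of fun i j : Fin n => x i ^ (l.1 j + (n - 1 - (j : ℕ)))).det *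
           (Matrix.of fun i j : Fin n => y i ^ (l.1 j + (n - 1 - (j : ℕ)))).det) := by
    intro l
    have hx1 : ∀ σ : Equiv.Perm (Fin n),
        (Matrix.of fun i' i : Fin n => x i' ^ (l.1 (σ i) + (n - 1 - ((σ i : Fin n) : ℕ)))).det
          = ((Equiv.Perm.sign σ : ℤ) : ℂ) *
            (Matrix.of fun i j : Fin n => x i ^ (l.1 j + (n - 1 - (j : ℕ)))).det := by
      intro σ
      have := Matrix.det_permute' σ
        (Matrix.of fun i j : Fin n => x i ^ (l.1 j + (n - 1 - (j : ℕ))))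
      convert this using 2
      ext i j
      rfl
    calc (∑ σ : Equiv.Perm (Fin n),
        ((fun k : Fin n → ℕ =>
          (∏ i : Fin n, (1 - t ^ (k i + 1)) * y i ^ (k i)) *
            (Matrix.of fun i' i : Fin n => x i' ^ (k i)).det) ∘ G) (l, σ))
        = ∑ σ : Equiv.Perm (Fin n),
            ((∏ i : Fin n, (1 - t ^ (l.1 i + (n - 1 - (i : ℕ)) + 1))) *
              (Matrix.of fun i j : Fin n => x i ^ (l.1 j + (n - 1 - (j : ℕ)))).det) *
            (((Equiv.Perm.sign σ : ℤ) : ℂ) *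
              ∏ i : Fin n, y i ^ (l.1 (σ i) + (n - 1 - ((σ i : Fin n) : ℕ)))) := by
          refine Finset.sum_congr rfl fun σ _ => ?_
          show (∏ i : Fin n, (1 - t ^ ((l.1 (σ i) + (n - 1 - ((σ i : Fin n) : ℕ))) + 1)) *
              y i ^ (l.1 (σ i) + (n - 1 - ((σ i : Fin n) : ℕ)))) *
              (Matrix.of fun i' i : Fin n =>
                x i' ^ (l.1 (σ i) + (n - 1 - ((σ i : Fin n) : ℕ)))).det = _
          rw [hx1 σ, Finset.prod_mul_distrib,
            Equiv.prod_comp σ (fun j : Fin n => 1 - t ^ (l.1 j + (n - 1 - (j : ℕ)) + 1))]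
          ring
      _ = ((∏ i : Fin n, (1 - t ^ (l.1 i + (n - 1 - (i : ℕ)) + 1))) *
            (Matrix.of fun i j : Fin n => x i ^ (l.1 j + (n - 1 - (j : ℕ)))).det) *
          ∑ σ : Equiv.Perm (Fin n), ((Equiv.Perm.sign σ : ℤ) : ℂ) *
            ∏ i : Fin n, y i ^ (l.1 (σ i) + (n - 1 - ((σ i : Fin n) : ℕ))) := by
          rw [← Finset.mul_sum]
      _ = _ := by
          have hY : (∑ σ : Equiv.Perm (Fin n), ((Equiv.Perm.sign σ : ℤ) : ℂ) *
              ∏ i : Fin n, y i ^ (l.1 (σ i) + (n - 1 - ((σ i : Fin n) : ℕ))))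
              = (Matrix.of fun i j : Fin n => y i ^ (l.1 j + (n - 1 - (j : ℕ)))).det := by
            rw [← Matrix.det_transpose, Matrix.det_apply']
            refine Finset.sum_congr rfl fun σ _ => ?_
            simp [Matrix.transpose_apply]
          rw [hY]
          ring
  have hfiber2 : HasSum (fun l : {l : Fin n → ℕ // Antitone l} =>
      (∏ i : Fin n, (1 - t ^ (l.1 i + (n - 1 - (i : ℕ)) + 1))) *
        ((Matrix.of fun i j : Fin n => x i ^ (l.1 j + (n - 1 - (j : ℕ)))).det *
         (Matrix.of fun i j : Fin n => y i ^ (l.1 j + (n - 1 - (j : ℕ)))).det)) S.det := by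
    convert hfiber using 1
    funext l
    exact (key l).symm
  -- final assembly
  have h := hfiber2.mul_right ((vprod x * vprod y)⁻¹)
  have hvc : S.det * (vprod x * vprod y)⁻¹ = (vprod x * vprod y)⁻¹ * S.det := mul_comm _ _
  rw [hvc] at h
  have hFeq : (fun l : {l : Fin n → ℕ // Antitone l} =>
      (∏ i : Fin n, (1 - t ^ (l.1 i + (n - (i : ℕ))))) * schurPoly l.1 x * schurPoly l.1 y)
      = fun l : {l : Fin n → ℕ // Antitone l} =>
        ((∏ i : Fin n, (1 - t ^ (l.1 i + (n - 1 - (i : ℕ)) + 1))) *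
          ((Matrix.of fun i j : Fin n => x i ^ (l.1 j + (n - 1 - (j : ℕ)))).det *
           (Matrix.of fun i j : Fin n => y i ^ (l.1 j + (n - 1 - (j : ℕ)))).det)) *
          (vprod x * vprod y)⁻¹ := by
    funext l
    have hP : (∏ i : Fin n, (1 - t ^ (l.1 i + (n - (i : ℕ)))))
        = ∏ i : Fin n, (1 - t ^ (l.1 i + (n - 1 - (i : ℕ)) + 1)) := by
      refine Finset.prod_congr rfl fun i _ => ?_
      have hi := i.isLt
      have he : l.1 i + (n - (i : ℕ)) = l.1 i + (n - 1 - (i : ℕ)) + 1 := by omega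
      rw [he]
    rw [hP]
    simp only [schurPoly]
    rw [div_eq_mul_inv, div_eq_mul_inv, mul_inv]
    ring
  rw [hFeq]
  exact h
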